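/- Let S[1..n] be a string, 0 < τ ≤ 1, 1 ≤ i ≤ j ≤ n, and b = ⌊log₂(j − i + 1)⌋. If a is a τ-majority of S[i..j] and k is the leftmost occurrence of a in S[i..j], then a occurs at least τ·2^b times in the range S[k..min(n, k + 2^{b+1} − 1)], i.e., occ(a, S[k..min(n, k + 2^{b+1} − 1)]) ≥ τ·2^b. -/
import Mathlib


/-- `occ S a i j` is the number of positions `k` with `i ≤ k ≤ j` and `S k = a`. -/
def occ {α : Type*} [DecidableEq α] (S : ℕ → α) (a : α) (i j : ℕ) : ℕ :=
  ((Finset.Icc i j).filter (fun k => S k = a)).card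

/-- If `a` is a τ-majority of `S[i..j]` and `k` is the leftmost occurrence of
`a` in `S[i..j]`, then with `b = ⌊log₂(j - i + 1)⌋`, the symbol `a` occurs at
least `τ·2^b` times in `S[k..min(n, k + 2^{b+1} - 1)]`. -/
theorem stmt_9 {α : Type*} [DecidableEq α] (S : ℕ → α) (n : ℕ) (τ : ℝ)
    (hτ0 : 0 < τ) (hτ1 : τ ≤ 1) (i j : ℕ)
    (hi : 1 ≤ i) (hij : i ≤ j) (hjn : j ≤ n)
    (a : α) (k : ℕ) (hik : i ≤ k) (hkj : k ≤ j) (ha : S k = a)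
    (hleft : ∀ p, i ≤ p → p < k → S p ≠ a)
    (hmaj : (occ S a i j : ℝ) ≥ τ * ((j : ℝ) - (i : ℝ) + 1)) :
    (occ S a k (min n (k + 2 ^ (Nat.log 2 (j - i + 1) + 1) - 1)) : ℝ)
      ≥ τ * 2 ^ (Nat.log 2 (j - i + 1)) := by
  set b := Nat.log 2 (j - i + 1) with hb
  set m := min n (k + 2 ^ (b + 1) - 1) with hm
  -- j ≤ m
  have hlt : j - i + 1 < 2 ^ (b + 1) := Nat.lt_pow_succ_log_self one_lt_two _
  have hjm : j ≤ m := by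
    apply le_min hjn
    omega
  -- occ S a i j ≤ occ S a k m
  have hocc : occ S a i j ≤ occ S a k m := by
    apply Finset.card_le_card
    intro p hp
    simp only [Finset.mem_filter, Finset.mem_Icc] at hp ⊢
    refine ⟨⟨?_, le_trans hp.1.2 hjm⟩, hp.2⟩
    by_contra hpk
    exact hleft p hp.1.1 (by omega) hp.2
  -- 2^b ≤ j - i + 1
  have hpow : (2 : ℕ) ^ b ≤ j - i + 1 := Nat.pow_log_le_self 2 (by omega)
  have h1 : τ * 2 ^ b ≤ τ * ((j : ℝ) - (i : ℝ) + 1) := by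
    apply mul_le_mul_of_nonneg_left _ hτ0.le
    have : ((2 ^ b : ℕ) : ℝ) ≤ ((j - i + 1 : ℕ) : ℝ) := by exact_mod_cast hpow
    push_cast at this
    have : (2 : ℝ) ^ b ≤ (j : ℝ) - (i : ℝ) + 1 := by
      rw [Nat.cast_sub hij] at this; linarith
    linarith
  calc τ * 2 ^ b ≤ τ * ((j : ℝ) - (i : ℝ) + 1) := h1
    _ ≤ (occ S a i j : ℝ) := hmaj
    _ ≤ (occ S a k m : ℝ) := by exact_mod_cast hocc
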